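/- Every regular closed subset F of a separable normed space X (i.e., F equals the closure of its interior) is a local Lipschitz one set: there exists a continuous (indeed 1-Lipschitz) function f : X → ℝ with 𝕃ip f = χ_F. -/

import Mathlib

open scoped Classical
open Filter Metric Topology ENNReal

/-- The local Lipschitz derivative. -/
noncomputable def LLip {X Y : Type*} [MetricSpace X] [MetricSpace Y] (f : X → Y) (x : X) : ℝ≥0∞ :=
  ⨅ (r : ℝ) (_ : 0 < r), ⨆ (u : X) (_ : u ∈ ball x r) (v : X) (_ : v ∈ ball x r) (_ : u ≠ v),
    ENNReal.ofReal (dist (f u) (f v) / dist u v)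

private lemma llip_le_one {X : Type*} [MetricSpace X] {f : X → ℝ}
    (hf : LipschitzWith 1 f) (x : X) : LLip f x ≤ 1 := by
  refine le_trans (iInf₂_le 1 one_pos) ?_
  refine iSup₂_le fun u _ => iSup₂_le fun v _ => iSup_le fun huv => ?_
  rw [← ENNReal.ofReal_one]
  refine ENNReal.ofReal_le_ofReal ?_
  rw [div_le_one (dist_pos.2 huv)]
  simpa using hf.dist_le_mul u v

private lemma llip_zero {X : Type*} [MetricSpace X] {f : X → ℝ} {x : X} {r : ℝ}
    (hr : 0 < r) (h : ∀ y ∈ ball x r, f y = 0) : LLip f x = 0 := by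
  refine le_antisymm ?_ zero_le
  refine le_trans (iInf₂_le r hr) ?_
  refine iSup₂_le fun u hu => iSup₂_le fun v hv => iSup_le fun _ => ?_
  simp [h u hu, h v hv]

private lemma one_le_llip {X : Type*} [MetricSpace X] {f : X → ℝ} {x : X}
    (h : ∀ r > 0, ∀ η : ℝ, 0 < η → ∃ u ∈ ball x r, ∃ v ∈ ball x r, u ≠ v ∧
      1 - η ≤ dist (f u) (f v) / dist u v) : 1 ≤ LLip f x := by
  refine le_iInf₂ fun r hr => ?_
  refine ENNReal.le_of_forall_pos_le_add fun ε hε _ => ?_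
  obtain ⟨u, hu, v, hv, huv, hslope⟩ := h r hr ε (by exact_mod_cast hε)
  have h1 : ENNReal.ofReal (1 - (ε : ℝ)) ≤
      ⨆ (u : X) (_ : u ∈ ball x r) (v : X) (_ : v ∈ ball x r) (_ : u ≠ v),
        ENNReal.ofReal (dist (f u) (f v) / dist u v) :=
    le_iSup₂_of_le u hu (le_iSup₂_of_le v hv
      (le_iSup_of_le huv (ENNReal.ofReal_le_ofReal hslope)))
  calc (1 : ℝ≥0∞) = ENNReal.ofReal ((1 - (ε : ℝ)) + ε) := by simp
    _ ≤ ENNReal.ofReal (1 - (ε : ℝ)) + ENNReal.ofReal (ε : ℝ) := ENNReal.ofReal_add_le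
    _ ≤ _ + ε := by
        rw [ENNReal.ofReal_coe_nnreal]
        exact add_le_add_left h1 _

private lemma one_le_llip_infDist {X : Type*} [NormedAddCommGroup X] [NormedSpace ℝ X]
    {S : Set X} (hS : S.Nonempty) (hSc : IsClosed S) {x : X} (hx : x ∈ closure Sᶜ) :
    1 ≤ LLip (fun y => infDist y S) x := by
  refine one_le_llip fun r hr η hη => ?_
  -- find p ∈ Sᶜ close to x
  obtain ⟨p, hpS, hpx⟩ := Metric.mem_closure_iff.1 hx (r / 2) (by linarith)
  set d := infDist p S with hd
  have hdpos : 0 < d := (hSc.notMem_iff_infDist_pos hS).1 hpS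
  set t := min d (r / 2) with ht
  have htpos : 0 < t := lt_min hdpos (by linarith)
  have htd : t ≤ d := min_le_left _ _
  have htr : t ≤ r / 2 := min_le_right _ _
  -- almost nearest point y
  obtain ⟨y, hyS, hpy⟩ := (infDist_lt_iff hS).1
    (show infDist p S < d + η * t by nlinarith)
  set D := dist p y with hD
  have hdD : d ≤ D := infDist_le_dist_of_mem hyS
  have hDpos : 0 < D := lt_of_lt_of_le hdpos hdD
  have htD : t ≤ D := le_trans htd hdD
  set v := p + (t / D) • (y - p) with hv
  have hpv : dist p v = t := by
    rw [dist_eq_norm, hv]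
    have : p - (p + (t / D) • (y - p)) = (-(t / D)) • (y - p) := by module
    rw [this, norm_smul, norm_neg, Real.norm_eq_abs,
      abs_of_nonneg (div_nonneg htpos.le hDpos.le)]
    rw [show ‖y - p‖ = D by rw [hD, dist_comm, dist_eq_norm]]
    field_simp
  have hvy : dist v y = D - t := by
    rw [dist_eq_norm, hv]
    have : p + (t / D) • (y - p) - y = (1 - t / D) • (p - y) := by module
    rw [this, norm_smul, Real.norm_eq_abs,
      abs_of_nonneg (by rw [sub_nonneg, div_le_one hDpos]; exact htD)]
    rw [show ‖p - y‖ = D by rw [hD, dist_eq_norm]]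
    field_simp
  have hfv : infDist v S ≤ D - t := hvy ▸ infDist_le_dist_of_mem hyS
  refine ⟨p, ?_, v, ?_, ?_, ?_⟩
  · rw [mem_ball, dist_comm]; linarith
  · rw [mem_ball]
    calc dist v x ≤ dist v p + dist p x := dist_triangle _ _ _
      _ < t + r / 2 := by rw [dist_comm v p, hpv, dist_comm p x]; exact add_lt_add_right hpx t
      _ ≤ r := by linarith
  · intro hpe
    rw [hpe, dist_self] at hpv
    exact htpos.ne hpv
  · rw [hpv]
    have h1 : d - (D - t) ≤ dist (infDist p S) (infDist v S) := by
      rw [Real.dist_eq]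
      have := le_abs_self (infDist p S - infDist v S)
      have h2 : d - (D - t) ≤ infDist p S - infDist v S := by
        rw [← hd]; linarith
      linarith
    rw [le_div_iff₀ htpos]
    nlinarith [h1, hpy]

theorem regularClosed_localLipschitzOne {X : Type*} [NormedAddCommGroup X]
    [NormedSpace ℝ X] [Nontrivial X] [TopologicalSpace.SeparableSpace X]
    (F : Set X) (hF : F = closure (interior F)) :
    ∃ f : X → ℝ, LipschitzWith 1 f ∧ Continuous f ∧
      ∀ x, LLip f x = (if x ∈ F then 1 else 0) := by
  by_cases hne : ((interior F)ᶜ).Nonempty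
  · refine ⟨fun y => infDist y (interior F)ᶜ, lipschitz_infDist_pt _,
      (lipschitz_infDist_pt _).continuous, fun x => ?_⟩
    by_cases hx : x ∈ F
    · simp only [hx, if_true]
      refine le_antisymm (llip_le_one (lipschitz_infDist_pt _) x) ?_
      refine one_le_llip_infDist hne isOpen_interior.isClosed_compl ?_
      rw [compl_compl]
      exact hF ▸ hx
    · simp only [hx, if_false]
      have hFc : IsClosed F := hF ▸ isClosed_closure
      obtain ⟨r, hr, hball⟩ := Metric.isOpen_iff.1 hFc.isOpen_compl x hx
      refine llip_zero hr fun y hy => infDist_zero_of_mem ?_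
      exact fun hyU => hball hy (interior_subset hyU)
  · have hUuniv : interior F = Set.univ := by
      rw [← Set.compl_empty_iff, ← Set.not_nonempty_iff_eq_empty]; exact hne
    have hFuniv : F = Set.univ := Set.eq_univ_of_univ_subset (hUuniv ▸ interior_subset)
    refine ⟨fun y => infDist y ({0} : Set X), lipschitz_infDist_pt _,
      (lipschitz_infDist_pt _).continuous, fun x => ?_⟩
    simp only [hFuniv, Set.mem_univ, if_true]
    refine le_antisymm (llip_le_one (lipschitz_infDist_pt _) x) ?_
    refine one_le_llip_infDist (Set.singleton_nonempty (0:X)) isClosed_singleton ?_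
    rw [(dense_compl_singleton (0 : X)).closure_eq]
    trivial
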